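/- Let μ, μ̂_i, μ̃_i (i ≥ 0) be real numbers with μ̃_0 ∈ [a,b] and μ ∈ [a,b]. Suppose for each i ≥ 1: |μ̃_i − μ̂_i| ≤ (1/2^{B+1}) · 2(U'(i) + U(i−1)) whenever μ̂_i ∈ [μ̃_{i−1} − U'(i) − U(i−1), μ̃_{i−1} + U'(i) + U(i−1)], where U(0) = b−a and U(i) = U'(i) + (1/2^B)(U'(i) + U(i−1)). Then the event ∪_{i≥1}{|μ̃_i − μ| > U(i)} is contained in the event ∪_{i≥1}{|μ̂_i − μ| > U'(i)}. -/
import Mathlib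


/-- Lemma 1 of the ICQ analysis (deterministic version): if the quantization error at each
round `i ≥ 1` is at most `(1/2^B)(U'(i) + U(i-1))` whenever the empirical mean `μ̂ i` lies in
the interval of half-width `U'(i) + U(i-1)` centered at the previous decoded value `μ̃ (i-1)`,
then the event `∪_{i≥1} {|μ̃ i − μ| > U i}` is contained in `∪_{i≥1} {|μ̂ i − μ| > U' i}`. -/
theorem ICQ_error_event_inclusion (B : ℕ) (hB : 1 ≤ B) (a b : ℝ) (μ : ℝ)
    (μhat μtil : ℕ → ℝ) (U U' : ℕ → ℝ)
    (hμtil0 : μtil 0 ∈ Set.Icc a b) (hμ : μ ∈ Set.Icc a b)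
    (hU0 : U 0 = b - a)
    (hUrec : ∀ i, 1 ≤ i → U i = U' i + (1 / 2 ^ B) * (U' i + U (i - 1)))
    (hquant : ∀ i, 1 ≤ i →
      |μhat i - μtil (i - 1)| ≤ U' i + U (i - 1) →
      |μtil i - μhat i| ≤ (1 / 2 ^ (B + 1)) * (2 * (U' i + U (i - 1)))) :
    (∃ i, 1 ≤ i ∧ U i < |μtil i - μ|) → (∃ i, 1 ≤ i ∧ U' i < |μhat i - μ|) := by
  contrapose!
  intro hgood
  intro i hi
  induction i with
  | zero => omega
  | succ n ih =>
    -- show |μtil n - μ| ≤ U n first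
    have hstep : ∀ m, |μtil m - μ| ≤ U m := by
      intro m
      induction m with
      | zero =>
        rw [hU0]
        have h1 := hμtil0.1; have h2 := hμtil0.2
        have h3 := hμ.1; have h4 := hμ.2
        rw [abs_le]; constructor <;> linarith
      | succ k ihk =>
        have hk1 : 1 ≤ k + 1 := by omega
        have hhat : |μhat (k+1) - μ| ≤ U' (k+1) := hgood (k+1) hk1
        have hkk : k + 1 - 1 = k := by omega
        have hin : |μhat (k+1) - μtil k| ≤ U' (k+1) + U k := by
          have := abs_sub_le (μhat (k+1)) μ (μtil k)
          rw [abs_sub_comm μ (μtil k)] at this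
          linarith
        have hq := hquant (k+1) hk1 (by rw [hkk]; exact hin)
        rw [hkk] at hq
        have hq' : |μtil (k+1) - μhat (k+1)| ≤ (1 / 2 ^ B) * (U' (k+1) + U k) := by
          have : (1 / 2 ^ (B + 1) : ℝ) * (2 * (U' (k+1) + U k)) = (1 / 2 ^ B) * (U' (k+1) + U k) := by
            rw [pow_succ]; ring
          linarith [hq, this ▸ hq]
        have hU := hUrec (k+1) hk1
        rw [hkk] at hU
        have := abs_sub_le (μtil (k+1)) (μhat (k+1)) μ
        rw [hU]; linarith
    exact hstep (n+1)
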